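/- In every 2-coloring of the edges of K_n there is a Hamiltonian path that is the concatenation of a red path and a blue path (i.e., the vertex set can be partitioned into the vertex sets of a red path and a blue path that share no vertices, where empty or single-vertex paths are allowed). -/

import Mathlib

open SimpleGraph Walk

namespace RedBlueAux

variable {n : ℕ}

/-- The target configuration: a red path followed by a blue path whose
combined support is (up to membership) `a :: L`. -/
def Good (c : Sym2 (Fin n) → Fin 2) (a : Fin n) (L : List (Fin n)) : Prop :=
  ∃ (u v w : Fin n) (p : (⊤ : SimpleGraph (Fin n)).Walk u v)
    (q : (⊤ : SimpleGraph (Fin n)).Walk v w),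
    (∀ e ∈ p.edges, c e = 0) ∧ (∀ e ∈ q.edges, c e = 1) ∧
    (p.append q).IsPath ∧ ∀ x : Fin n, x ∈ (p.append q).support ↔ x = a ∨ x ∈ L

lemma fin2_add_one_eq_zero {x : Fin 2} : x + 1 = 0 ↔ x = 1 := by revert x; decide

lemma fin2_add_one_eq_one {x : Fin 2} : x + 1 = 1 ↔ x = 0 := by revert x; decide

lemma fin2_not_zero {x : Fin 2} (h : ¬ x = 0) : x = 1 := by revert x; decide

lemma good_congr {c : Sym2 (Fin n) → Fin 2} {a : Fin n} {L L' : List (Fin n)}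
    (hL : ∀ x, x ∈ L' ↔ x ∈ L) (h : Good c a L') : Good c a L := by
  obtain ⟨u, v, w, p, q, h1, h2, h3, h4⟩ := h
  exact ⟨u, v, w, p, q, h1, h2, h3, fun x => (h4 x).trans (by rw [hL])⟩

lemma good_swap {c : Sym2 (Fin n) → Fin 2} {a : Fin n} {L : List (Fin n)}
    (h : Good (fun e => c e + 1) a L) : Good c a L := by
  obtain ⟨u, v, w, p, q, h1, h2, h3, h4⟩ := h
  refine ⟨w, v, u, q.reverse, p.reverse, ?_, ?_, ?_, ?_⟩
  · intro e he
    rw [edges_reverse, List.mem_reverse] at he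
    have := h2 e he
    simpa [fin2_add_one_eq_one] using this
  · intro e he
    rw [edges_reverse, List.mem_reverse] at he
    have := h1 e he
    simpa [fin2_add_one_eq_zero] using this
  · rw [← reverse_append, isPath_reverse_iff]; exact h3
  · intro x
    rw [← reverse_append, support_reverse, List.mem_reverse]
    exact h4 x

lemma good_of_perm {c : Sym2 (Fin n) → Fin 2} {a : Fin n} {L : List (Fin n)}
    {u v w : Fin n} {p : (⊤ : SimpleGraph (Fin n)).Walk u v}
    {q : (⊤ : SimpleGraph (Fin n)).Walk v w}
    (h1 : ∀ e ∈ p.edges, c e = 0) (h2 : ∀ e ∈ q.edges, c e = 1)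
    (hperm : (p.append q).support.Perm (a :: L)) (hnd : (a :: L).Nodup) :
    Good c a L :=
  ⟨u, v, w, p, q, h1, h2, (isPath_def _).mpr (hperm.nodup_iff.mpr hnd),
    fun x => by rw [hperm.mem_iff, List.mem_cons]⟩


/-- Case A: the edge `a u` is red; prepend `a` to the red path. -/
lemma stepA {c : Sym2 (Fin n) → Fin 2} {u v w a : Fin n}
    (p : (⊤ : SimpleGraph (Fin n)).Walk u v) (q : (⊤ : SimpleGraph (Fin n)).Walk v w)
    (hp : ∀ e ∈ p.edges, c e = 0) (hq : ∀ e ∈ q.edges, c e = 1)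
    (hpath : (p.append q).IsPath) (ha : a ∉ (p.append q).support)
    (hcol : c s(a, u) = 0) :
    Good c a (p.append q).support := by
  have hu_mem : u ∈ (p.append q).support := by simp
  have hau : a ≠ u := fun h => ha (h ▸ hu_mem)
  have hadj : (⊤ : SimpleGraph (Fin n)).Adj a u := by simpa using hau
  refine good_of_perm (p := Walk.cons hadj p) (q := q) ?_ hq ?_ ?_
  · intro e he
    rw [edges_cons, List.mem_cons] at he
    rcases he with rfl | he
    · exact hcol
    · exact hp e he
  · rw [cons_append, support_cons]
  · rw [List.nodup_cons]
    exact ⟨ha, (isPath_def _).mp hpath⟩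

/-- Case C1: the red path is trivial (`u = v`) and the edge `a v` is blue;
prepend `a` to the blue path. -/
lemma stepC1 {c : Sym2 (Fin n) → Fin 2} {v w a : Fin n}
    (q : (⊤ : SimpleGraph (Fin n)).Walk v w)
    (hq : ∀ e ∈ q.edges, c e = 1)
    (hpath : q.IsPath) (ha : a ∉ q.support)
    (hcol : c s(a, v) = 1) :
    Good c a q.support := by
  have hav : a ≠ v := fun h => ha (h ▸ q.start_mem_support)
  have hadj : (⊤ : SimpleGraph (Fin n)).Adj a v := by simpa using hav
  refine good_of_perm (p := Walk.nil) (q := Walk.cons hadj q) (by simp) ?_ ?_ ?_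
  · intro e he
    rw [edges_cons, List.mem_cons] at he
    rcases he with rfl | he
    · exact hcol
    · exact hq e he
  · simp
  · rw [List.nodup_cons]
    exact ⟨ha, (isPath_def _).mp hpath⟩

/-- Case C0: `v ≠ w`, edges `w a` and `u w` are both red.  New red path
`a - w - u - … - v`, new blue path is `q` with its final vertex `w` removed. -/
lemma stepC0 {c : Sym2 (Fin n) → Fin 2} {u v w a : Fin n}
    (p : (⊤ : SimpleGraph (Fin n)).Walk u v) (q : (⊤ : SimpleGraph (Fin n)).Walk v w)
    (hp : ∀ e ∈ p.edges, c e = 0) (hq : ∀ e ∈ q.edges, c e = 1)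
    (hpath : (p.append q).IsPath) (ha : a ∉ (p.append q).support)
    (hvw : v ≠ w) (h1 : c s(w, a) = 0) (h2 : c s(u, w) = 0) :
    Good c a (p.append q).support := by
  have hnd : ((p.append q).support).Nodup := (isPath_def _).mp hpath
  rw [support_append, List.nodup_append] at hnd
  obtain ⟨hndp, hndq, hdisj⟩ := hnd
  have hw_tail : w ∈ q.support.tail := by
    have := q.end_mem_support
    rw [q.support_eq_cons, List.mem_cons] at this
    rcases this with h | h
    · exact absurd h.symm hvw
    · exact h
  have huw : u ≠ w := fun h => hdisj u p.start_mem_support u (h ▸ hw_tail) rfl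
  have haw : a ≠ w := by
    intro h
    exact ha (by rw [support_append, List.mem_append]; exact Or.inr (h ▸ hw_tail))
  -- decompose q from the end
  have hqnil : ¬ q.reverse.Nil := not_nil_of_ne (Ne.symm hvw)
  obtain ⟨w', hadj, r, hqr⟩ := not_nil_iff.mp hqnil
  have hq_eq : q = (Walk.cons hadj r).reverse := by rw [← hqr, reverse_reverse]
  have hadj_aw : (⊤ : SimpleGraph (Fin n)).Adj a w := by simpa using haw
  have hadj_wu : (⊤ : SimpleGraph (Fin n)).Adj w u := by simpa using huw.symm
  refine good_of_perm (p := Walk.cons hadj_aw (Walk.cons hadj_wu p)) (q := r.reverse)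
      ?_ ?_ ?_ ?_
  · intro e he
    rw [edges_cons, edges_cons, List.mem_cons, List.mem_cons] at he
    rcases he with rfl | rfl | he
    · rw [Sym2.eq_swap]; exact h1
    · rw [Sym2.eq_swap]; exact h2
    · exact hp e he
  · intro e he
    apply hq
    rw [hq_eq]
    rw [edges_reverse, List.mem_reverse] at he ⊢
    rw [edges_cons, List.mem_cons]
    exact Or.inr he
  · -- permutation of supports
    have hsupq : q.support = r.reverse.support ++ [w] := by
      rw [hq_eq, support_reverse, support_cons, support_reverse]
      simp
    rw [cons_append, cons_append, support_cons, support_cons, support_append,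
      support_append, hsupq]
    have hne : r.reverse.support ≠ [] := support_ne_nil _
    rw [List.tail_append_of_ne_nil hne]
    rw [← List.append_assoc]
    exact List.Perm.cons a (List.perm_append_singleton _ _).symm
  · rw [List.nodup_cons]
    exact ⟨ha, (isPath_def _).mp hpath⟩


lemma fin2_not_one {x : Fin 2} (h : ¬ x = 1) : x = 0 := by revert x; decide

/-- The key extension step: any red-blue configuration can absorb one more vertex. -/
lemma step {c : Sym2 (Fin n) → Fin 2} {u v w a : Fin n}
    (p : (⊤ : SimpleGraph (Fin n)).Walk u v) (q : (⊤ : SimpleGraph (Fin n)).Walk v w)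
    (hp : ∀ e ∈ p.edges, c e = 0) (hq : ∀ e ∈ q.edges, c e = 1)
    (hpath : (p.append q).IsPath) (ha : a ∉ (p.append q).support) :
    Good c a (p.append q).support := by
  by_cases hA : c s(a, u) = 0
  · exact stepA p q hp hq hpath ha hA
  by_cases hB : c s(w, a) = 1
  · -- mirror of case A : extend the blue path at its end
    apply good_congr (L' := (q.reverse.append p.reverse).support)
      (fun x => by rw [← reverse_append, support_reverse, List.mem_reverse])
    apply good_swap
    apply stepA q.reverse p.reverse
    · intro e he; rw [edges_reverse, List.mem_reverse] at he
      rw [fin2_add_one_eq_zero]; exact hq e he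
    · intro e he; rw [edges_reverse, List.mem_reverse] at he
      rw [fin2_add_one_eq_one]; exact hp e he
    · rw [← reverse_append, isPath_reverse_iff]; exact hpath
    · rw [← reverse_append, support_reverse, List.mem_reverse]; exact ha
    · show c s(a, w) + 1 = 0
      rw [fin2_add_one_eq_zero, Sym2.eq_swap]; exact hB
  have hA' : c s(a, u) = 1 := fin2_not_zero hA
  have hB' : c s(w, a) = 0 := fin2_not_one hB
  by_cases huv : u = v
  · subst huv
    have hpnil : p = Walk.nil := isPath_iff_eq_nil.mp hpath.of_append_left
    subst hpnil
    rw [nil_append] at hpath ha ⊢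
    exact stepC1 q hq hpath ha hA'
  by_cases hvw : v = w
  · subst hvw
    have hqnil : q = Walk.nil := isPath_iff_eq_nil.mp (hpath.of_append_right)
    subst hqnil
    apply good_congr (L' := p.reverse.support)
      (fun x => by simp [support_reverse, support_append])
    apply good_swap
    apply stepC1 p.reverse
    · intro e he; rw [edges_reverse, List.mem_reverse] at he
      rw [fin2_add_one_eq_one]; exact hp e he
    · rw [isPath_reverse_iff]; exact hpath.of_append_left
    · rw [support_reverse, List.mem_reverse]
      intro h; exact ha (by rw [support_append]; exact List.mem_append.mpr (Or.inl h))
    · show c s(a, v) + 1 = 1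
      rw [fin2_add_one_eq_one, Sym2.eq_swap]; exact hB'
  by_cases hC : c s(u, w) = 0
  · exact stepC0 p q hp hq hpath ha hvw hB' hC
  · have hC' : c s(u, w) = 1 := fin2_not_zero hC
    apply good_congr (L' := (q.reverse.append p.reverse).support)
      (fun x => by rw [← reverse_append, support_reverse, List.mem_reverse])
    apply good_swap
    apply stepC0 q.reverse p.reverse
    · intro e he; rw [edges_reverse, List.mem_reverse] at he
      rw [fin2_add_one_eq_zero]; exact hq e he
    · intro e he; rw [edges_reverse, List.mem_reverse] at he
      rw [fin2_add_one_eq_one]; exact hp e he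
    · rw [← reverse_append, isPath_reverse_iff]; exact hpath
    · rw [← reverse_append, support_reverse, List.mem_reverse]; exact ha
    · exact fun h => huv h.symm
    · show c s(u, a) + 1 = 0
      rw [fin2_add_one_eq_zero, Sym2.eq_swap]; exact hA'
    · show c s(w, u) + 1 = 0
      rw [fin2_add_one_eq_zero, Sym2.eq_swap]; exact hC'

/-- Covering any nonempty finite set of vertices by a red path followed by a blue path. -/
lemma cover (c : Sym2 (Fin n) → Fin 2) (S : Finset (Fin n)) (hS : S.Nonempty) :
    ∃ (u v w : Fin n) (p : (⊤ : SimpleGraph (Fin n)).Walk u v)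
      (q : (⊤ : SimpleGraph (Fin n)).Walk v w),
      (∀ e ∈ p.edges, c e = 0) ∧ (∀ e ∈ q.edges, c e = 1) ∧
      (p.append q).IsPath ∧ ∀ x : Fin n, x ∈ (p.append q).support ↔ x ∈ S := by
  classical
  induction S using Finset.induction_on with
  | empty => exact absurd hS (by simp)
  | @insert a S haS ih =>
    rcases S.eq_empty_or_nonempty with rfl | hS'
    · refine ⟨a, a, a, Walk.nil, Walk.nil, by simp, by simp, by simp, ?_⟩
      intro x; simp
    · obtain ⟨u, v, w, p, q, hp, hq, hpath, hsupp⟩ := ih hS'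
      have ha : a ∉ (p.append q).support := fun h => haS ((hsupp a).mp h)
      obtain ⟨u', v', w', p', q', hp', hq', hpath', hsupp'⟩ :=
        step p q hp hq hpath ha
      refine ⟨u', v', w', p', q', hp', hq', hpath', ?_⟩
      intro x
      rw [hsupp' x, hsupp x, Finset.mem_insert]

end RedBlueAux

/-- In every 2-coloring of the edges of `K_n` (`n ≥ 1`) there is a Hamiltonian path
which is the concatenation of a red path and a blue path (either of which may be
trivial). -/
theorem hamiltonian_path_red_blue (n : ℕ) (hn : 0 < n)
    (c : Sym2 (Fin n) → Fin 2) :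
    ∃ (u v w : Fin n) (p : (⊤ : SimpleGraph (Fin n)).Walk u v)
      (q : (⊤ : SimpleGraph (Fin n)).Walk v w),
      (∀ e ∈ p.edges, c e = 0) ∧ (∀ e ∈ q.edges, c e = 1) ∧
      (p.append q).IsPath ∧ ∀ x : Fin n, x ∈ (p.append q).support := by
  obtain ⟨u, v, w, p, q, hp, hq, hpath, hsupp⟩ :=
    RedBlueAux.cover c Finset.univ (by
      have : (0 : ℕ) < n := hn
      exact ⟨⟨0, this⟩, Finset.mem_univ _⟩)
  exact ⟨u, v, w, p, q, hp, hq, hpath, fun x => (hsupp x).mpr (Finset.mem_univ x)⟩
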